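/- Let M be a matroid with fundamental pattern X. Then the matroid minimum rank of X equals the height of the lattice of flats of M, which equals r(M), and M attains this minimum: mr(X) = r(M). -/

import Mathlib

open Set

variable {α β : Type*}

/-- The rank of a matroid: the (common) cardinality of its bases. -/
noncomputable def Matroid.mrk (M : Matroid α) : ℕ := sSup (Set.ncard '' {B | M.IsBase B})

/-- A hyperplane of a matroid: a maximal proper flat
(equivalently, a flat of rank `r(M) - 1`). -/
def Matroid.IsHyperplane (M : Matroid α) (H : Set α) : Prop :=
  M.IsFlat H ∧ H ≠ M.E ∧ ∀ F, M.IsFlat F → H ⊆ F → F = H ∨ F = M.E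

/-- A circuit of a matroid: a minimal dependent set. -/
def Matroid.IsCircuit' (M : Matroid α) (Ct : Set α) : Prop :=
  Ct ⊆ M.E ∧ ¬ M.Indep Ct ∧ ∀ D, D ⊂ Ct → M.Indep D

/-- A point of a matroid: a rank-one flat, i.e. the closure of a nonloop. -/
def Matroid.IsPoint (M : Matroid α) (P : Set α) : Prop :=
  M.IsFlat P ∧ ∃ e, e ∉ M.closure ∅ ∧ P = M.closure {e}

/-- The closure of any set is a flat. -/
lemma Matroid.flat_closure' (M : Matroid α) (X : Set α) : M.IsFlat (M.closure X) := by
  rw [Matroid.closure_def, sInter_eq_iInter]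
  have : Nonempty {F // F ∈ {F | M.IsFlat F ∧ X ∩ M.E ⊆ F}} :=
    ⟨⟨M.E, M.ground_isFlat, inter_subset_right⟩⟩
  exact Matroid.IsFlat.iInter fun i => i.2.1

/-- `mrk` equals the cardinality of any base. -/
lemma Matroid.mrk_eq_ncard_base {M : Matroid α} {B : Set α} (hB : M.IsBase B) :
    M.mrk = B.ncard := by
  have h : Set.ncard '' {B' | M.IsBase B'} = {B.ncard} := by
    ext n
    constructor
    · rintro ⟨B', hB', rfl⟩
      exact hB'.ncard_eq_ncard_of_isBase hB
    · rintro rfl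
      exact ⟨B, hB, rfl⟩
  rw [Matroid.mrk, h, csSup_singleton]

/-- Any strictly increasing chain of flats of length `n+1` shows `n ≤ mrk`. -/
lemma Matroid.chain_le [Fintype α] {N : Matroid α} (hNE : N.E = Set.univ) {n : ℕ}
    {f : Fin (n + 1) → Set α} (hf : StrictMono f) (hfl : ∀ i, N.IsFlat (f i)) :
    n ≤ N.mrk := by
  have key : ∀ k : ℕ, ∀ hk : k ≤ n, ∃ I, N.Indep I ∧ I ⊆ f ⟨k, Nat.lt_succ_of_le hk⟩ ∧ I.ncard = k := by
    intro k
    induction k with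
    | zero => exact fun _ => ⟨∅, N.empty_indep, empty_subset _, Set.ncard_empty _⟩
    | succ k ih =>
      intro hk
      obtain ⟨I, hI, hIsub, hIcard⟩ := ih (by omega)
      have hlt : (⟨k, by omega⟩ : Fin (n + 1)) < ⟨k + 1, by omega⟩ := by
        simp [Fin.lt_def]
      have hss := hf hlt
      obtain ⟨e, hek1, hek⟩ := exists_of_ssubset hss
      have heI : e ∉ I := fun h => hek (hIsub h)
      have hecl : e ∉ N.closure I := by
        intro h
        have h2 : e ∈ N.closure (f ⟨k, by omega⟩) := N.closure_subset_closure hIsub h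
        rw [(hfl _).closure] at h2
        exact hek h2
      have hins : N.Indep (insert e I) := by
        rw [hI.insert_indep_iff_of_notMem heI]
        exact ⟨by rw [hNE]; trivial, hecl⟩
      refine ⟨insert e I, hins, insert_subset hek1 (hIsub.trans hss.le), ?_⟩
      rw [Set.ncard_insert_of_notMem heI I.toFinite, hIcard]
  obtain ⟨I, hI, -, hIcard⟩ := key n le_rfl
  obtain ⟨B, hB, hIB⟩ := hI.exists_isBase_superset
  rw [Matroid.mrk_eq_ncard_base hB, ← hIcard]
  exact Set.ncard_le_ncard hIB B.toFinite

/-- Every independent set gives rise to a chain of flats ending at its closure. -/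
lemma Matroid.exists_chain_of_indep [Fintype α] {M : Matroid α} :
    ∀ (n : ℕ) (I : Set α), M.Indep I → I.ncard = n →
      ∃ f : Fin (n + 1) → Set α, StrictMono f ∧ (∀ i, M.IsFlat (f i)) ∧
        f (Fin.last n) = M.closure I := by
  intro n
  induction n with
  | zero =>
    intro I hI hcard
    refine ⟨fun _ => M.closure I, ?_, fun _ => M.flat_closure' I, rfl⟩
    intro i j hij
    exact absurd (Fin.ext (by omega)) hij.ne
  | succ n ih =>
    intro I hI hcard
    obtain ⟨e, he⟩ : I.Nonempty := Set.nonempty_of_ncard_ne_zero (by omega)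
    have hI' : M.Indep (I \ {e}) := hI.subset diff_subset
    have hcard' : (I \ {e}).ncard = n := by
      rw [Set.ncard_diff_singleton_of_mem he, hcard]
      omega
    obtain ⟨f', hf', hfl', hlast'⟩ := ih (I \ {e}) hI' hcard'
    have hlt : M.closure (I \ {e}) ⊂ M.closure I := by
      refine (M.closure_subset_closure diff_subset).ssubset_of_ne ?_
      intro h
      have heI : e ∈ M.closure I := M.subset_closure I hI.subset_ground he
      rw [← h] at heI
      exact hI.notMem_closure_sdiff_of_mem he heI
    refine ⟨Fin.snoc f' (M.closure I), ?_, ?_, by simp⟩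
    · intro i j hij
      rcases Fin.eq_castSucc_or_eq_last j with ⟨j', rfl⟩ | rfl
      · have hine : i ≠ Fin.last (n + 1) := (hij.trans (Fin.castSucc_lt_last j')).ne
        obtain ⟨i', rfl⟩ := Fin.exists_castSucc_eq.2 hine
        rw [Fin.snoc_castSucc, Fin.snoc_castSucc]
        exact hf' (Fin.castSucc_lt_castSucc_iff.1 hij)
      · have hine : i ≠ Fin.last (n + 1) := fun h => absurd (h ▸ hij) (lt_irrefl _)
        obtain ⟨i', rfl⟩ := Fin.exists_castSucc_eq.2 hine
        rw [Fin.snoc_castSucc, Fin.snoc_last]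
        have h1 : f' i' ⊆ M.closure (I \ {e}) := hlast' ▸ hf'.monotone (Fin.le_last i')
        exact lt_of_le_of_lt h1 hlt
    · intro i
      rcases Fin.eq_castSucc_or_eq_last i with ⟨i', rfl⟩ | rfl
      · rw [Fin.snoc_castSucc]; exact hfl' i'
      · rw [Fin.snoc_last]; exact M.flat_closure' I

/-- Separation by a hyperplane: a flat avoiding a point extends to a hyperplane
avoiding that point. -/
lemma Matroid.exists_hyperplane_sep [Fintype α] {M : Matroid α} (hME : M.E = Set.univ)
    {F : Set α} {e : α} (hF : M.IsFlat F) (he : e ∉ F) :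
    ∃ H, M.IsHyperplane H ∧ F ⊆ H ∧ e ∉ H := by
  set S : Set (Set α) := {H | M.IsFlat H ∧ F ⊆ H ∧ e ∉ H} with hS
  obtain ⟨H, hHS, hmax⟩ :=
    Set.Finite.exists_maximalFor id S (Set.toFinite S) ⟨F, hF, subset_rfl, he⟩
  simp only [id] at hmax
  obtain ⟨hHf, hFH, heH⟩ := hHS
  have ha : ∀ F', M.IsFlat F' → H ⊆ F' → F' ≠ H → e ∈ F' := by
    intro F' hF' hHF' hne
    by_contra heF'
    exact hne ((hmax ⟨hF', hFH.trans hHF', heF'⟩ hHF').antisymm hHF')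
  have hgnd : ∀ X : Set α, X ⊆ M.E := fun X => by rw [hME]; exact subset_univ X
  have hb : M.closure (insert e H) = Set.univ := by
    by_contra hK
    obtain ⟨x, hx⟩ : ∃ x, x ∉ M.closure (insert e H) := by
      by_contra h
      push_neg at h
      exact hK (eq_univ_of_forall h)
    have hxH : x ∉ H := fun h =>
      hx (M.subset_closure _ (hgnd _) (Set.mem_insert_of_mem _ h))
    have heF'' : e ∉ M.closure (insert x H) := by
      intro hecl
      have heH' : e ∉ M.closure H := by rw [hHf.closure]; exact heH
      exact hx (Matroid.mem_closure_insert heH' hecl)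
    have hmem : M.closure (insert x H) ∈ S := by
      refine ⟨M.flat_closure' _, ?_, heF''⟩
      exact hFH.trans ((subset_insert _ _).trans (M.subset_closure _ (hgnd _)))
    have hsub : H ⊆ M.closure (insert x H) :=
      (subset_insert _ _).trans (M.subset_closure _ (hgnd _))
    have heq := hmax hmem hsub
    have hxcl : x ∈ M.closure (insert x H) :=
      M.subset_closure _ (hgnd _) (Set.mem_insert _ _)
    replace hxcl := heq hxcl
    exact hxH hxcl
  refine ⟨H, ⟨hHf, ?_, ?_⟩, hFH, heH⟩
  · intro h
    rw [h, hME] at heH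
    exact heH trivial
  · intro F' hF' hHF'
    by_cases hne : F' = H
    · exact Or.inl hne
    · refine Or.inr ?_
      have heF' := ha F' hF' hHF' hne
      have hsub : M.closure (insert e H) ⊆ F' := by
        have h1 : insert e H ⊆ F' := insert_subset heF' hHF'
        calc M.closure (insert e H) ⊆ M.closure F' := M.closure_subset_closure h1
          _ = F' := hF'.closure
      rw [hb] at hsub
      rw [hME]
      exact (subset_univ _).antisymm hsub

/-- Every flat of `M` is a flat of any `N` for which the hyperplanes of `M` are flats. -/
lemma Matroid.flat_of_flat [Fintype α] {M N : Matroid α} (hME : M.E = Set.univ)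
    (hNE : N.E = Set.univ) (hN : ∀ H, M.IsHyperplane H → N.IsFlat H)
    {F : Set α} (hF : M.IsFlat F) : N.IsFlat F := by
  by_cases hFU : F = Set.univ
  · rw [hFU, ← hNE]; exact N.ground_isFlat
  · obtain ⟨e, he⟩ : ∃ e, e ∉ F := by
      by_contra h
      push_neg at h
      exact hFU (eq_univ_of_forall h)
    set T : Set (Set α) := {H | M.IsHyperplane H ∧ F ⊆ H} with hT
    obtain ⟨H₀, hH₀, hFH₀, -⟩ := Matroid.exists_hyperplane_sep hME hF he
    have hTne : Nonempty {H // H ∈ T} := ⟨⟨H₀, hH₀, hFH₀⟩⟩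
    have hFeq : F = ⋂₀ T := by
      apply subset_antisymm
      · exact subset_sInter fun H hH => hH.2
      · intro x hx
        by_contra hxF
        obtain ⟨H, hH, hFH, hxH⟩ := Matroid.exists_hyperplane_sep hME hF hxF
        exact hxH (hx H ⟨hH, hFH⟩)
    rw [hFeq, sInter_eq_iInter]
    exact Matroid.IsFlat.iInter fun i => hN i.1 i.2.1

/-- for the fundamental pattern `X` of a matroid `M` (so that
`R(X)` consists of the matroids on the ground set of `M` in which every
hyperplane of `M` is a flat), the matroid minimum rank of `X` equals the height
of the lattice of flats of `M`, which equals `r(M)`, and `M` attains it. -/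
theorem fundamental_pattern_min_rank [Fintype α] (M : Matroid α)
    (hME : M.E = Set.univ) :
    IsLeast (Matroid.mrk ''
        {N : Matroid α | N.E = Set.univ ∧ ∀ H, M.IsHyperplane H → N.IsFlat H})
      M.mrk ∧
    IsGreatest {n : ℕ | ∃ f : Fin (n + 1) → Set α, StrictMono f ∧ ∀ i, M.IsFlat (f i)}
      M.mrk := by
  obtain ⟨B, hB⟩ := M.exists_isBase
  have hmrk := Matroid.mrk_eq_ncard_base hB
  obtain ⟨f, hf, hfl, -⟩ :=
    Matroid.exists_chain_of_indep B.ncard B hB.indep rfl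
  have hchain : ∃ f : Fin (M.mrk + 1) → Set α, StrictMono f ∧ ∀ i, M.IsFlat (f i) := by
    rw [hmrk]; exact ⟨f, hf, hfl⟩
  constructor
  · constructor
    · exact ⟨M, ⟨hME, fun H hH => hH.1⟩, rfl⟩
    · rintro n ⟨N, ⟨hNE, hN⟩, rfl⟩
      obtain ⟨g, hg, hgl⟩ := hchain
      exact Matroid.chain_le hNE hg
        (fun i => Matroid.flat_of_flat hME hNE hN (hgl i))
  · constructor
    · exact hchain
    · rintro n ⟨g, hg, hgl⟩
      exact Matroid.chain_le hME hg hgl
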